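/- (Non-resonance of separated frequencies) Let $N_1 \gg N_5 > 0$ and let $C_1, C_2, C_3, C_4 > 0$, $r_1,\dots,r_5 \in \mathbb{R}$ with $|r_i| \le \epsilon N_1$ for $\epsilon$ sufficiently small (depending on the $C_i$). Set $\xi_i = C_i N_1 + r_i$ for $i = 1,\dots,4$ and $\xi_5 = r_5$. Then $\big|(\xi_1+\xi_2+\xi_3+\xi_4 \pm \xi_5)^4 - (\xi_1^4+\xi_2^4+\xi_3^4+\xi_4^4 \pm \xi_5^4)\big| \ge c\, N_1^4$ for a positive constant $c$ depending only on $C_1,\dots,C_4$. -/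

import Mathlib

lemma pow4_diff_bound (x y M : ℝ) (hx : |x| ≤ M) (hy : |y| ≤ M) :
    |x ^ 4 - y ^ 4| ≤ 4 * M ^ 3 * |x - y| := by
  have hM : 0 ≤ M := (abs_nonneg x).trans hx
  have h : x ^ 4 - y ^ 4 = (x - y) * ((x + y) * (x ^ 2 + y ^ 2)) := by ring
  rw [h, abs_mul, abs_mul]
  have h1 : |x + y| ≤ 2 * M := (abs_add_le x y).trans (by linarith)
  have h2 : |x ^ 2 + y ^ 2| ≤ 2 * M ^ 2 := by
    rw [abs_of_nonneg (by positivity)]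
    nlinarith [sq_abs x, sq_abs y, abs_nonneg x, abs_nonneg y]
  calc |x - y| * (|x + y| * |x ^ 2 + y ^ 2|) ≤ |x - y| * (4 * M ^ 3) := by
        have hp : |x + y| * |x ^ 2 + y ^ 2| ≤ 4 * M ^ 3 := by
          nlinarith [abs_nonneg (x + y), abs_nonneg (x ^ 2 + y ^ 2)]
        exact mul_le_mul_of_nonneg_left hp (abs_nonneg (x - y))
    _ = 4 * M ^ 3 * |x - y| := by ring

/-- Non-resonance of separated frequencies: for `C₁,…,C₄ > 0` there are `ε, c > 0` such
that for `N₁ ≫ N₅ > 0` and perturbations `|rᵢ| ≤ ε N₁`, with `ξᵢ = Cᵢ N₁ + rᵢ`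
(`i = 1,…,4`) and `ξ₅ = r₅`, one has
`|(ξ₁+ξ₂+ξ₃+ξ₄ ± ξ₅)⁴ - (ξ₁⁴+ξ₂⁴+ξ₃⁴+ξ₄⁴ ± ξ₅⁴)| ≥ c N₁⁴` (both sign choices). -/
theorem nonresonance_separated_frequencies (C₁ C₂ C₃ C₄ : ℝ)
    (h₁ : 0 < C₁) (h₂ : 0 < C₂) (h₃ : 0 < C₃) (h₄ : 0 < C₄) :
    ∃ ε : ℝ, 0 < ε ∧ ∃ c : ℝ, 0 < c ∧
      ∀ N₁ N₅ : ℝ, 0 < N₁ → 0 < N₅ → N₅ ≤ ε * N₁ →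
        ∀ r₁ r₂ r₃ r₄ r₅ : ℝ,
          |r₁| ≤ ε * N₁ → |r₂| ≤ ε * N₁ → |r₃| ≤ ε * N₁ → |r₄| ≤ ε * N₁ → |r₅| ≤ ε * N₁ →
          c * N₁ ^ 4 ≤
              |((C₁ * N₁ + r₁) + (C₂ * N₁ + r₂) + (C₃ * N₁ + r₃) + (C₄ * N₁ + r₄) + r₅) ^ 4
                - ((C₁ * N₁ + r₁) ^ 4 + (C₂ * N₁ + r₂) ^ 4 + (C₃ * N₁ + r₃) ^ 4
                    + (C₄ * N₁ + r₄) ^ 4 + r₅ ^ 4)| ∧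
          c * N₁ ^ 4 ≤
              |((C₁ * N₁ + r₁) + (C₂ * N₁ + r₂) + (C₃ * N₁ + r₃) + (C₄ * N₁ + r₄) - r₅) ^ 4
                - ((C₁ * N₁ + r₁) ^ 4 + (C₂ * N₁ + r₂) ^ 4 + (C₃ * N₁ + r₃) ^ 4
                    + (C₄ * N₁ + r₄) ^ 4 - r₅ ^ 4)| := by
  set S : ℝ := C₁ + C₂ + C₃ + C₄ with hS_def
  have hS : 0 < S := by positivity
  set D : ℝ := S ^ 4 - (C₁ ^ 4 + C₂ ^ 4 + C₃ ^ 4 + C₄ ^ 4) with hD_def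
  have hD : 0 < D := by
    have step : ∀ a b : ℝ, 0 < a → 0 < b → a ^ 4 + b ^ 4 < (a + b) ^ 4 := by
      intro a b ha hb
      nlinarith [mul_pos ha hb, mul_pos (mul_pos ha ha) hb, mul_pos ha (mul_pos hb hb),
        mul_pos (mul_pos ha ha) (mul_pos hb hb)]
    have s1 := step C₁ C₂ h₁ h₂
    have s2 := step (C₁ + C₂) C₃ (by linarith) h₃
    have s3 := step (C₁ + C₂ + C₃) C₄ (by linarith) h₄
    rw [hD_def, hS_def]
    linarith
  set K : ℝ := 20 * (S + 5) ^ 3 + 4 * ((C₁ + 1) ^ 3 + (C₂ + 1) ^ 3 + (C₃ + 1) ^ 3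
      + (C₄ + 1) ^ 3) + 1 with hK_def
  have hK : 0 < K := by
    have p0 : (0:ℝ) < (S + 5) ^ 3 := by positivity
    have p1 : (0:ℝ) < (C₁ + 1) ^ 3 := by positivity
    have p2 : (0:ℝ) < (C₂ + 1) ^ 3 := by positivity
    have p3 : (0:ℝ) < (C₃ + 1) ^ 3 := by positivity
    have p4 : (0:ℝ) < (C₄ + 1) ^ 3 := by positivity
    rw [hK_def]; linarith
  refine ⟨min 1 (D / (2 * K)), lt_min one_pos (by positivity), D / 2, by positivity,
    fun N₁ N₅ hN₁ hN₅ hN₅₁ r₁ r₂ r₃ r₄ r₅ hr₁ hr₂ hr₃ hr₄ hr₅ => ?_⟩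
  set ε : ℝ := min 1 (D / (2 * K)) with hε_def
  have hε1 : ε ≤ 1 := min_le_left _ _
  have hε2 : ε ≤ D / (2 * K) := min_le_right _ _
  have hε0 : 0 < ε := lt_min one_pos (by positivity)
  have hεK : ε * K ≤ D / 2 := by
    have := mul_le_mul_of_nonneg_right hε2 hK.le
    have he : D / (2 * K) * K = D / 2 := by field_simp
    linarith
  have claim : ∀ s u : ℝ, |s| ≤ ε * N₁ → |u| ≤ ε * N₁ ^ 4 →
      D / 2 * N₁ ^ 4 ≤
        |((C₁ * N₁ + r₁) + (C₂ * N₁ + r₂) + (C₃ * N₁ + r₃) + (C₄ * N₁ + r₄) + s) ^ 4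
          - ((C₁ * N₁ + r₁) ^ 4 + (C₂ * N₁ + r₂) ^ 4 + (C₃ * N₁ + r₃) ^ 4
              + (C₄ * N₁ + r₄) ^ 4 + u)| := by
    intro s u hs hu
    set t : ℝ := r₁ + r₂ + r₃ + r₄ + s with ht_def
    have ht : |t| ≤ 5 * (ε * N₁) := by
      calc |t| ≤ |r₁| + |r₂| + |r₃| + |r₄| + |s| := by
            rw [ht_def]
            exact (abs_add_le _ _).trans (by
              have := (abs_add_le (r₁ + r₂ + r₃) r₄)
              have := (abs_add_le (r₁ + r₂) r₃)
              have := (abs_add_le r₁ r₂)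
              linarith)
        _ ≤ 5 * (ε * N₁) := by linarith
    -- bound for the big sum
    have hεN : ε * N₁ ≤ N₁ := by
      calc ε * N₁ ≤ 1 * N₁ := mul_le_mul_of_nonneg_right hε1 hN₁.le
        _ = N₁ := one_mul _
    have hb0 : |(S * N₁ + t) ^ 4 - (S * N₁) ^ 4| ≤ 20 * (S + 5) ^ 3 * ε * N₁ ^ 4 := by
      have hx : |S * N₁ + t| ≤ (S + 5) * N₁ := by
        have := abs_add_le (S * N₁) t
        rw [abs_of_nonneg (by positivity : (0:ℝ) ≤ S * N₁)] at this
        have : (S + 5) * N₁ = S * N₁ + 5 * N₁ := by ring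
        linarith [ht, hεN]
      have hy : |S * N₁| ≤ (S + 5) * N₁ := by
        rw [abs_of_nonneg (by positivity : (0:ℝ) ≤ S * N₁)]
        have : (S + 5) * N₁ = S * N₁ + 5 * N₁ := by ring
        linarith
      have := pow4_diff_bound (S * N₁ + t) (S * N₁) ((S + 5) * N₁) hx hy
      have he : S * N₁ + t - S * N₁ = t := by ring
      rw [he] at this
      calc |(S * N₁ + t) ^ 4 - (S * N₁) ^ 4| ≤ 4 * ((S + 5) * N₁) ^ 3 * |t| := this
        _ ≤ 4 * ((S + 5) * N₁) ^ 3 * (5 * (ε * N₁)) :=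
            mul_le_mul_of_nonneg_left ht (by positivity)
        _ = 20 * (S + 5) ^ 3 * ε * N₁ ^ 4 := by ring
    have hbC : ∀ Ci ri : ℝ, 0 < Ci → |ri| ≤ ε * N₁ →
        |(Ci * N₁ + ri) ^ 4 - (Ci * N₁) ^ 4| ≤ 4 * (Ci + 1) ^ 3 * ε * N₁ ^ 4 := by
      intro Ci ri hCi hri
      have hx : |Ci * N₁ + ri| ≤ (Ci + 1) * N₁ := by
        have := abs_add_le (Ci * N₁) ri
        rw [abs_of_nonneg (by positivity : (0:ℝ) ≤ Ci * N₁)] at this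
        have : (Ci + 1) * N₁ = Ci * N₁ + N₁ := by ring
        linarith [hri, hεN]
      have hy : |Ci * N₁| ≤ (Ci + 1) * N₁ := by
        rw [abs_of_nonneg (by positivity : (0:ℝ) ≤ Ci * N₁)]
        have : (Ci + 1) * N₁ = Ci * N₁ + N₁ := by ring
        linarith
      have := pow4_diff_bound (Ci * N₁ + ri) (Ci * N₁) ((Ci + 1) * N₁) hx hy
      have he : Ci * N₁ + ri - Ci * N₁ = ri := by ring
      rw [he] at this
      calc |(Ci * N₁ + ri) ^ 4 - (Ci * N₁) ^ 4| ≤ 4 * ((Ci + 1) * N₁) ^ 3 * |ri| := this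
        _ ≤ 4 * ((Ci + 1) * N₁) ^ 3 * (ε * N₁) :=
            mul_le_mul_of_nonneg_left hri (by positivity)
        _ = 4 * (Ci + 1) ^ 3 * ε * N₁ ^ 4 := by ring
    have hb1 := hbC C₁ r₁ h₁ hr₁
    have hb2 := hbC C₂ r₂ h₂ hr₂
    have hb3 := hbC C₃ r₃ h₃ hr₃
    have hb4 := hbC C₄ r₄ h₄ hr₄
    set E : ℝ := ((C₁ * N₁ + r₁) + (C₂ * N₁ + r₂) + (C₃ * N₁ + r₃) + (C₄ * N₁ + r₄) + s) ^ 4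
          - ((C₁ * N₁ + r₁) ^ 4 + (C₂ * N₁ + r₂) ^ 4 + (C₃ * N₁ + r₃) ^ 4
              + (C₄ * N₁ + r₄) ^ 4 + u) with hE_def
    have hEeq : E = D * N₁ ^ 4 + ((S * N₁ + t) ^ 4 - (S * N₁) ^ 4)
        - ((C₁ * N₁ + r₁) ^ 4 - (C₁ * N₁) ^ 4) - ((C₂ * N₁ + r₂) ^ 4 - (C₂ * N₁) ^ 4)
        - ((C₃ * N₁ + r₃) ^ 4 - (C₃ * N₁) ^ 4) - ((C₄ * N₁ + r₄) ^ 4 - (C₄ * N₁) ^ 4)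
        - u := by
      rw [hE_def, hD_def, hS_def, ht_def]; ring
    have a0 := abs_le.1 hb0
    have a1 := abs_le.1 hb1
    have a2 := abs_le.1 hb2
    have a3 := abs_le.1 hb3
    have a4 := abs_le.1 hb4
    have au := abs_le.1 hu
    have hKε : ε * K * N₁ ^ 4 ≤ D / 2 * N₁ ^ 4 :=
      mul_le_mul_of_nonneg_right hεK (by positivity)
    have hexp : ε * K * N₁ ^ 4 = 20 * (S + 5) ^ 3 * ε * N₁ ^ 4
        + 4 * (C₁ + 1) ^ 3 * ε * N₁ ^ 4 + 4 * (C₂ + 1) ^ 3 * ε * N₁ ^ 4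
        + 4 * (C₃ + 1) ^ 3 * ε * N₁ ^ 4 + 4 * (C₄ + 1) ^ 3 * ε * N₁ ^ 4
        + ε * N₁ ^ 4 := by rw [hK_def]; ring
    have hElb : D / 2 * N₁ ^ 4 ≤ E := by
      rw [hEeq]
      have hsum : 20 * (S + 5) ^ 3 * ε * N₁ ^ 4 + 4 * (C₁ + 1) ^ 3 * ε * N₁ ^ 4
          + 4 * (C₂ + 1) ^ 3 * ε * N₁ ^ 4 + 4 * (C₃ + 1) ^ 3 * ε * N₁ ^ 4
          + 4 * (C₄ + 1) ^ 3 * ε * N₁ ^ 4 + ε * N₁ ^ 4 ≤ D / 2 * N₁ ^ 4 := by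
        rw [← hexp]; exact hKε
      clear_value S D K ε t E
      linarith [a0.1, a1.2, a2.2, a3.2, a4.2, au.2]
    exact hElb.trans (le_abs_self E)
  have hr₅4 : r₅ ^ 4 ≤ ε * N₁ ^ 4 := by
    have h1 : r₅ ^ 4 = |r₅| ^ 4 := by rw [← abs_pow, abs_of_nonneg (by positivity)]
    have h2 : |r₅| ^ 4 ≤ (ε * N₁) ^ 4 := by
      apply pow_le_pow_left₀ (abs_nonneg r₅) hr₅ 4
    have h3 : (ε * N₁) ^ 4 ≤ ε * N₁ ^ 4 := by
      have hε3 : ε ^ 3 ≤ 1 := pow_le_one₀ hε0.le hε1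
      calc (ε * N₁) ^ 4 = ε ^ 3 * (ε * N₁ ^ 4) := by ring
        _ ≤ 1 * (ε * N₁ ^ 4) := mul_le_mul_of_nonneg_right hε3 (by positivity)
        _ = ε * N₁ ^ 4 := one_mul _
    linarith
  have habs : |r₅ ^ 4| ≤ ε * N₁ ^ 4 := by
    rw [abs_of_nonneg (by positivity)]; exact hr₅4
  have hneg : |(-(r₅ ^ 4))| ≤ ε * N₁ ^ 4 := by rwa [abs_neg]
  constructor
  · exact claim r₅ (r₅ ^ 4) hr₅ habs
  · have := claim (-r₅) (-(r₅ ^ 4)) (by rwa [abs_neg]) hneg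
    have he : ((C₁ * N₁ + r₁) + (C₂ * N₁ + r₂) + (C₃ * N₁ + r₃) + (C₄ * N₁ + r₄) + -r₅) ^ 4
          - ((C₁ * N₁ + r₁) ^ 4 + (C₂ * N₁ + r₂) ^ 4 + (C₃ * N₁ + r₃) ^ 4
              + (C₄ * N₁ + r₄) ^ 4 + -(r₅ ^ 4))
        = ((C₁ * N₁ + r₁) + (C₂ * N₁ + r₂) + (C₃ * N₁ + r₃) + (C₄ * N₁ + r₄) - r₅) ^ 4
          - ((C₁ * N₁ + r₁) ^ 4 + (C₂ * N₁ + r₂) ^ 4 + (C₃ * N₁ + r₃) ^ 4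
              + (C₄ * N₁ + r₄) ^ 4 - r₅ ^ 4) := by ring
    rwa [he] at this
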